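/- There exists R > 0 with the following property: if f : ℝ → ℝ³ is differentiable and satisfies f′(t) = F(f(t)) for all t (i.e., f is a solution of the Lorenz system), and if ‖f(t₀) − c‖ ≤ R for some t₀, where c = (0, 0, 38), then ‖f(t) − c‖ ≤ R for all t ≥ t₀. That is, the closed ball of radius R about c is forward invariant under the Lorenz flow. -/

import Mathlib

/-- The Lorenz vector field `F(x, y, z) = (10(y − x), 28x − y − xz, xy − (8/3)z)`
on `ℝ³` (with classical parameters σ = 10, ρ = 28, β = 8/3). -/
noncomputable def lorenzField (p : EuclideanSpace ℝ (Fin 3)) : EuclideanSpace ℝ (Fin 3) :=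
  (WithLp.equiv 2 (Fin 3 → ℝ)).symm
    ![10 * (p 1 - p 0), 28 * p 0 - p 1 - p 0 * p 2, p 0 * p 1 - (8 / 3) * p 2]

/-- The center `c = (0, 0, 38)` of Lorenz's trapping ball. -/
noncomputable def lorenzCenter : EuclideanSpace ℝ (Fin 3) :=
  (WithLp.equiv 2 (Fin 3 → ℝ)).symm ![0, 0, 38]

/-- There exists `R > 0` such that the closed ball of radius `R` about
`c = (0, 0, 38)` is forward invariant under the Lorenz flow: every solution
`f` of the Lorenz system that satisfies `‖f(t₀) − c‖ ≤ R` at some time `t₀`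
satisfies `‖f(t) − c‖ ≤ R` for all `t ≥ t₀`. -/
theorem lorenz_ball_forward_invariant :
    ∃ R > (0 : ℝ), ∀ f : ℝ → EuclideanSpace ℝ (Fin 3),
      (∀ t : ℝ, HasDerivAt f (lorenzField (f t)) t) →
      ∀ t₀ : ℝ, ‖f t₀ - lorenzCenter‖ ≤ R →
      ∀ t : ℝ, t₀ ≤ t → ‖f t - lorenzCenter‖ ≤ R := by
  refine ⟨40, by norm_num, fun f hf t₀ h₀ t ht => ?_⟩
  -- squared distance
  set g : ℝ → ℝ := fun s => (f s 0)^2 + (f s 1)^2 + (f s 2 - 38)^2 with hg_def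
  have hnorm : ∀ s : ℝ, ‖f s - lorenzCenter‖ ^ 2 = g s := by
    intro s
    rw [EuclideanSpace.norm_eq, Real.sq_sqrt (by positivity)]
    simp [Fin.sum_univ_three, lorenzCenter, sq_abs, hg_def]
  -- component derivatives
  have hcomp : ∀ (i : Fin 3) (s : ℝ), HasDerivAt (fun u => f u i) (lorenzField (f s) i) s := by
    intro i s
    have h := (EuclideanSpace.proj (𝕜 := ℝ) i).hasFDerivAt.comp_hasDerivAt s (hf s)
    exact h
  have hF0 : ∀ s : ℝ, lorenzField (f s) 0 = 10 * (f s 1 - f s 0) := by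
    intro s; simp [lorenzField]
  have hF1 : ∀ s : ℝ, lorenzField (f s) 1 = 28 * f s 0 - f s 1 - f s 0 * f s 2 := by
    intro s; simp [lorenzField]
  have hF2 : ∀ s : ℝ, lorenzField (f s) 2 = f s 0 * f s 1 - (8 / 3) * f s 2 := by
    intro s; simp [lorenzField]
  -- derivative of g
  set D : ℝ → ℝ := fun s =>
      (10 * (f s 1 - f s 0) * f s 0 + f s 0 * (10 * (f s 1 - f s 0)))
    + ((28 * f s 0 - f s 1 - f s 0 * f s 2) * f s 1 + f s 1 * (28 * f s 0 - f s 1 - f s 0 * f s 2))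
    + ((f s 0 * f s 1 - (8/3) * f s 2) * (f s 2 - 38)
        + (f s 2 - 38) * (f s 0 * f s 1 - (8/3) * f s 2)) with hD_def
  have hg : ∀ s : ℝ, HasDerivAt g (D s) s := by
    intro s
    have h0 := hcomp 0 s; rw [hF0 s] at h0
    have h1 := hcomp 1 s; rw [hF1 s] at h1
    have h2 := hcomp 2 s; rw [hF2 s] at h2
    have h2' := h2.sub_const 38
    have := ((h0.mul h0).add (h1.mul h1)).add (h2'.mul h2')
    have e : g = (((fun u => f u 0) * fun u => f u 0) + (fun u => f u 1) * fun u => f u 1) +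
        (fun x => f x 2 - 38) * fun x => f x 2 - 38 := by
      funext u; simp [hg_def, sq]
    rw [e]
    exact this.congr_deriv (by simp only [hD_def])
  -- the auxiliary function h
  set h : ℝ → ℝ := fun s => (g s - 1600) * Real.exp (2 * s) with hh_def
  have hexp : ∀ s : ℝ, HasDerivAt (fun u : ℝ => Real.exp (2 * u)) (Real.exp (2 * s) * 2) s := by
    intro s
    simpa using ((hasDerivAt_id s).const_mul 2).exp
  have hh : ∀ s : ℝ, HasDerivAt h (D s * Real.exp (2 * s) + (g s - 1600) * (Real.exp (2 * s) * 2)) s := by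
    intro s
    exact ((hg s).sub_const 1600).mul (hexp s)
  have hh_nonpos : ∀ s : ℝ, D s * Real.exp (2 * s) + (g s - 1600) * (Real.exp (2 * s) * 2) ≤ 0 := by
    intro s
    have key : D s + 2 * (g s - 1600) ≤ 0 := by
      simp only [hD_def, hg_def]
      nlinarith [sq_nonneg (f s 0), sq_nonneg (f s 2 - 38/5), sq_nonneg (f s 1)]
    have hepos : (0 : ℝ) < Real.exp (2 * s) := Real.exp_pos _
    nlinarith
  -- h is antitone
  have hanti : AntitoneOn h (Set.univ : Set ℝ) := by
    apply antitoneOn_of_deriv_nonpos convex_univ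
    · exact (Continuous.continuousOn (by
        have : Differentiable ℝ h := fun s => (hh s).differentiableAt
        exact this.continuous))
    · intro s _
      exact ((hh s).differentiableAt).differentiableWithinAt
    · intro s _
      rw [(hh s).deriv]
      exact hh_nonpos s
  -- conclude
  have hg0 : g t₀ ≤ 1600 := by
    have := hnorm t₀
    nlinarith [norm_nonneg (f t₀ - lorenzCenter)]
  have hht : h t ≤ h t₀ := hanti (Set.mem_univ t₀) (Set.mem_univ t) ht
  have hht0 : h t₀ ≤ 0 := by
    have hepos : (0 : ℝ) < Real.exp (2 * t₀) := Real.exp_pos _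
    simp only [hh_def]
    nlinarith
  have hgt : g t ≤ 1600 := by
    have hepos : (0 : ℝ) < Real.exp (2 * t) := Real.exp_pos _
    have : (g t - 1600) * Real.exp (2 * t) ≤ 0 := le_trans hht hht0
    nlinarith
  have := hnorm t
  nlinarith [norm_nonneg (f t - lorenzCenter)]
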